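/- Let n ≥ 1, M ≥ 2, P > 0, σ_b > 0. Draw M codewords C(1), …, C(M) ∈ ℝⁿ independently, each with i.i.d. coordinates distributed N(0,P), and independently draw a noise vector Z ∈ ℝⁿ with i.i.d. coordinates N(0,σ_b²). Fix k ∈ {1,…,M} and let Y = C(k) + Z. Then the probability (over codebook and noise) that there exists i ≠ k with ‖Y − C(i)‖₂ ≤ ‖Y − C(k)‖₂ is at most (M−1)·(1 + P/(2σ_b²))^{−n/2}. -/

import Mathlib

open MeasureTheory ProbabilityTheory Real

open scoped NNReal ENNReal

lemma lebesgue_exp_quad {A : ℝ} (hA : 0 < A) (b : ℝ) :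
    ∫ x : ℝ, Real.exp (-(A*x^2) + b*x) = Real.sqrt (π / A) * Real.exp (b^2/(4*A)) := by
  have h : ∀ x : ℝ, -(A*x^2) + b*x = -(A*(x - b/(2*A))^2) + b^2/(4*A) := by
    intro x; field_simp; ring
  simp_rw [h, Real.exp_add, integral_mul_const]
  rw [integral_sub_right_eq_self (μ := volume) (fun x : ℝ => Real.exp (-(A*x^2))) (b/(2*A))]
  simp_rw [← neg_mul A, integral_gaussian]

lemma integrable_exp_quad {A : ℝ} (hA : 0 < A) (b : ℝ) :
    Integrable (fun x : ℝ => Real.exp (-(A*x^2) + b*x)) := by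
  have h : ∀ x : ℝ, -(A*x^2) + b*x = -(A*(x - b/(2*A))^2) + b^2/(4*A) := by
    intro x; field_simp; ring
  simp_rw [h, Real.exp_add]
  have : Integrable (fun x : ℝ => Real.exp (-(A*x^2))) := by
    simpa [neg_mul] using integrable_exp_neg_mul_sq hA
  exact (this.comp_sub_right (b/(2*A))).mul_const _

lemma gauss_exp_quad {v : ℝ≥0} (hv : v ≠ 0) (a b : ℝ) (ha : 0 ≤ a) :
    ∫⁻ x, ENNReal.ofReal (Real.exp (-(a*x^2) + b*x)) ∂(gaussianReal 0 v)
      = ENNReal.ofReal ((Real.sqrt (1+2*a*v))⁻¹ * Real.exp (b^2*v/(2*(1+2*a*v)))) := by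
  have hv' : (0:ℝ) < v := lt_of_le_of_ne v.coe_nonneg (by exact_mod_cast (Ne.symm hv))
  have hvne : (v:ℝ) ≠ 0 := ne_of_gt hv'
  set A : ℝ := a + 1/(2*v) with hA_def
  have hA : 0 < A := by positivity
  rw [gaussianReal_of_var_ne_zero 0 hv,
    lintegral_withDensity_eq_lintegral_mul _ (measurable_gaussianPDF 0 v)
      (by fun_prop)]
  have hpt : ∀ x : ℝ, (gaussianPDF 0 v x) * ENNReal.ofReal (Real.exp (-(a*x^2) + b*x))
      = ENNReal.ofReal ((Real.sqrt (2*π*v))⁻¹ * Real.exp (-(A*x^2) + b*x)) := by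
    intro x
    rw [gaussianPDF, ← ENNReal.ofReal_mul (gaussianPDFReal_nonneg 0 v x)]
    congr 1
    rw [gaussianPDFReal]
    rw [mul_assoc, ← Real.exp_add]
    congr 2
    rw [hA_def]
    field_simp
    ring
  simp only [Pi.mul_apply]
  simp_rw [hpt]
  simp_rw [ENNReal.ofReal_mul (by positivity : (0:ℝ) ≤ (Real.sqrt (2*π*v))⁻¹)]
  rw [lintegral_const_mul _ (by fun_prop)]
  rw [← ofReal_integral_eq_lintegral_ofReal (integrable_exp_quad hA b)
    (Filter.Eventually.of_forall fun x => (Real.exp_pos _).le)]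
  rw [lebesgue_exp_quad hA b, ← ENNReal.ofReal_mul (by positivity)]
  congr 1
  have h2vA : 2*(v:ℝ)*A = 1+2*a*v := by rw [hA_def]; field_simp; ring
  have h4A : b^2/(4*A) = b^2*v/(2*(1+2*a*v)) := by
    rw [← h2vA]
    field_simp
    ring
  rw [h4A, ← mul_assoc]
  congr 1
  rw [show (2*π*(v:ℝ)) = (π/A) * (2*v*A) by field_simp, Real.sqrt_mul (by positivity), h2vA]
  have h1 : (0:ℝ) < π/A := by positivity
  rw [mul_inv, mul_comm ((Real.sqrt (π/A))⁻¹) _, mul_assoc,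
    inv_mul_cancel₀ (by positivity : Real.sqrt (π/A) ≠ 0), mul_one]

lemma lintegral_pi_prod {n : ℕ} {X : Type*} [MeasurableSpace X] (μ : Fin n → Measure X)
    [∀ i, SigmaFinite (μ i)] (f : Fin n → X → ℝ≥0∞) (hf : ∀ i, Measurable (f i)) :
    ∫⁻ x, ∏ i, f i (x i) ∂Measure.pi μ = ∏ i, ∫⁻ x, f i x ∂(μ i) := by
  induction n with
  | zero => simp [Measure.pi_of_empty]
  | succ m ih =>
      have hmp := (measurePreserving_piFinSuccAbove (α := fun _ : Fin (m+1) => X) μ 0).symm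
      calc ∫⁻ x, ∏ i, f i (x i) ∂Measure.pi μ
          = ∫⁻ y, ∏ i, f i (((MeasurableEquiv.piFinSuccAbove (fun _ : Fin (m+1) => X) 0).symm y) i)
              ∂((μ 0).prod (Measure.pi fun j => μ (Fin.succAbove 0 j))) := by
            exact (hmp.lintegral_comp (f := fun c : Fin (m+1) → X => ∏ i, f i (c i))
              (by fun_prop)).symm
        _ = ∫⁻ y, f 0 y.1 * ∏ i : Fin m, f i.succ (y.2 i)
              ∂((μ 0).prod (Measure.pi fun j => μ (Fin.succAbove 0 j))) := by
            congr 1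
            ext y
            rw [Fin.prod_univ_succ]
            simp [MeasurableEquiv.piFinSuccAbove_symm_apply, Fin.insertNthEquiv,
              Fin.insertNth_zero, Fin.zero_succAbove]
        _ = (∫⁻ x, f 0 x ∂(μ 0)) * ∏ i : Fin m, ∫⁻ x, f i.succ x ∂(μ i.succ) := by
            rw [show (∫⁻ y, f 0 y.1 * ∏ i : Fin m, f i.succ (y.2 i)
                ∂((μ 0).prod (Measure.pi fun j => μ (Fin.succAbove 0 j))))
                = (∫⁻ x, f 0 x ∂(μ 0)) * ∫⁻ d, ∏ i : Fin m, f i.succ (d i)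
                    ∂(Measure.pi fun j => μ (Fin.succAbove 0 j)) from
              lintegral_prod_mul (hf 0).aemeasurable
                (Finset.measurable_prod _ (fun (i : Fin m) _ =>
                  (hf i.succ).comp (measurable_pi_apply i))).aemeasurable]
            congr 1
            have := ih (fun j => μ (Fin.succ j)) (fun j => f j.succ) (fun j => hf j.succ)
            simpa [Fin.zero_succAbove] using this
        _ = ∏ i, ∫⁻ x, f i x ∂(μ i) := by rw [Fin.prod_univ_succ]

lemma map_eval_pair {M : ℕ} {X : Type*} [MeasurableSpace X] (μ : Measure X)
    [IsProbabilityMeasure μ] {k i : Fin M} (hik : i ≠ k) :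
    (Measure.pi fun _ : Fin M => μ).map (fun c => (c k, c i)) = μ.prod μ := by
  classical
  have hmeas : Measurable (fun c : Fin M → X => (c k, c i)) :=
    (measurable_pi_apply k).prodMk (measurable_pi_apply i)
  symm
  apply Measure.prod_eq
  intro s t hs ht
  rw [Measure.map_apply hmeas (hs.prod ht)]
  have hpre : (fun c : Fin M → X => (c k, c i)) ⁻¹' (s ×ˢ t)
      = Set.pi Set.univ (fun m => if m = k then s else if m = i then t else Set.univ) := by
    ext c
    simp only [Set.mem_preimage, Set.mem_prod, Set.mem_pi, Set.mem_univ, forall_true_left]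
    constructor
    · rintro ⟨h1, h2⟩ m
      by_cases h : m = k
      · subst h; simp [h1]
      · by_cases h' : m = i
        · subst h'; simp [hik, h2]
        · simp [h, h']
    · intro h
      constructor
      · have := h k; simpa using this
      · have := h i; simpa [hik] using this
  rw [hpre, Measure.pi_pi]
  rw [← Finset.mul_prod_erase Finset.univ _ (Finset.mem_univ k)]
  rw [← Finset.mul_prod_erase _ _ (Finset.mem_erase.2 ⟨hik, Finset.mem_univ i⟩)]
  rw [Finset.prod_eq_one (fun m hm => by
    simp only [Finset.mem_erase] at hm
    rw [if_neg hm.2.1, if_neg hm.1, measure_univ]), mul_one]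
  simp [hik]

lemma toNNReal_coe {v : ℝ} (hv : 0 < v) : ((v.toNNReal : ℝ≥0) : ℝ) = v :=
  Real.coe_toNNReal v hv.le

lemma toNNReal_ne_zero {v : ℝ} (hv : 0 < v) : v.toNNReal ≠ 0 := by
  simp [Real.toNNReal_eq_zero, not_le, hv]

lemma lemA {v : ℝ} (hv : 0 < v) (d : ℝ) :
    ∫⁻ u, ENNReal.ofReal (Real.exp (-((4*v)⁻¹*(d^2+2*d*u)))) ∂(gaussianReal 0 v.toNNReal)
      = ENNReal.ofReal (Real.exp (-((8*v)⁻¹*d^2))) := by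
  have h : ∀ u : ℝ, Real.exp (-((4*v)⁻¹*(d^2+2*d*u)))
      = Real.exp (-((4*v)⁻¹*d^2)) * Real.exp (-((0:ℝ)*u^2) + (-(2*(4*v)⁻¹*d))*u) := by
    intro u; rw [← Real.exp_add]; congr 1; ring
  simp_rw [h, ENNReal.ofReal_mul (Real.exp_pos _).le]
  rw [lintegral_const_mul _ (by fun_prop)]
  rw [gauss_exp_quad (toNNReal_ne_zero hv) 0 _ le_rfl]
  rw [toNNReal_coe hv]
  norm_num
  rw [← ENNReal.ofReal_mul (Real.exp_pos _).le, ← Real.exp_add]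
  congr 2
  field_simp
  ring

lemma lemB {p : ℝ} (hp : 0 < p) {c : ℝ} (hc : 0 ≤ c) (x : ℝ) :
    ∫⁻ u, ENNReal.ofReal (Real.exp (-(c*(x-u)^2))) ∂(gaussianReal 0 p.toNNReal)
      = ENNReal.ofReal ((Real.sqrt (1+2*c*p))⁻¹ * Real.exp (-(c/(1+2*c*p)*x^2))) := by
  have h : ∀ u : ℝ, Real.exp (-(c*(x-u)^2))
      = Real.exp (-(c*x^2)) * Real.exp (-(c*u^2) + (2*c*x)*u) := by
    intro u; rw [← Real.exp_add]; congr 1; ring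
  simp_rw [h, ENNReal.ofReal_mul (Real.exp_pos _).le]
  rw [lintegral_const_mul _ (by fun_prop)]
  rw [gauss_exp_quad (toNNReal_ne_zero hp) c _ hc, toNNReal_coe hp]
  rw [← ENNReal.ofReal_mul (Real.exp_pos _).le]
  congr 1
  have hκ : (0:ℝ) < 1+2*c*p := by positivity
  rw [← mul_assoc, mul_comm (Real.exp _) _, mul_assoc, ← Real.exp_add]
  congr 2
  field_simp
  ring

lemma lemC {p : ℝ} (hp : 0 < p) {c : ℝ} (hc : 0 ≤ c) :
    ∫⁻ u, ENNReal.ofReal (Real.exp (-(c*u^2))) ∂(gaussianReal 0 p.toNNReal)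
      = ENNReal.ofReal ((Real.sqrt (1+2*c*p))⁻¹) := by
  have h : ∀ u : ℝ, Real.exp (-(c*u^2)) = Real.exp (-(c*u^2) + 0*u) := by
    intro u; congr 1; ring
  simp_rw [h]
  rw [gauss_exp_quad (toNNReal_ne_zero hp) c 0 hc, toNNReal_coe hp]
  norm_num

lemma pair_bound (n M : ℕ) {P σb : ℝ} (hP : 0 < P) (hσb : 0 < σb) (k i : Fin M)
    (hik : i ≠ k) :
    ((Measure.pi fun _ : Fin M => Measure.pi fun _ : Fin n => gaussianReal 0 P.toNNReal).prod
        (Measure.pi fun _ : Fin n => gaussianReal 0 (σb ^ 2).toNNReal))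
      {ω : (Fin M → Fin n → ℝ) × (Fin n → ℝ) |
        ∑ j, ((ω.1 k j - ω.1 i j)^2 + 2*(ω.1 k j - ω.1 i j)*ω.2 j) ≤ 0}
      ≤ (ENNReal.ofReal ((Real.sqrt (1+P/(2*σb^2)))⁻¹))^n := by
  set v : ℝ := σb^2 with hv_def
  have hv : 0 < v := by positivity
  set γP := gaussianReal 0 P.toNNReal with hγP
  set γσ := gaussianReal 0 v.toNNReal with hγσ
  set ν := (Measure.pi fun _ : Fin M => Measure.pi fun _ : Fin n => γP) with hν
  set ζ := (Measure.pi fun _ : Fin n => γσ) with hζ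
  set μ := ν.prod ζ with hμ
  set S : (Fin M → Fin n → ℝ) × (Fin n → ℝ) → ℝ :=
    fun ω => ∑ j, ((ω.1 k j - ω.1 i j)^2 + 2*(ω.1 k j - ω.1 i j)*ω.2 j) with hS_def
  have hSm : Measurable S := Finset.measurable_sum _ (fun j _ => by fun_prop)
  have hfm : Measurable (fun ω => ENNReal.ofReal (Real.exp (-((4*v)⁻¹ * S ω)))) := by fun_prop
  -- Markov / Chernoff step
  have step1 : μ {ω | S ω ≤ 0} ≤ ∫⁻ ω, ENNReal.ofReal (Real.exp (-((4*v)⁻¹ * S ω))) ∂μ := by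
    calc μ {ω | S ω ≤ 0}
        ≤ μ {ω | 1 ≤ ENNReal.ofReal (Real.exp (-((4*v)⁻¹ * S ω)))} := by
          apply measure_mono
          intro ω hω
          simp only [Set.mem_setOf_eq] at hω ⊢
          rw [ENNReal.one_le_ofReal]
          apply Real.one_le_exp
          have : (0:ℝ) ≤ (4*v)⁻¹ := by positivity
          nlinarith
      _ ≤ ∫⁻ ω, ENNReal.ofReal (Real.exp (-((4*v)⁻¹ * S ω))) ∂μ := by
          simpa using mul_meas_ge_le_lintegral₀ hfm.aemeasurable 1
  refine step1.trans ?_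
  -- rewrite as a product over coordinates
  have hprod : ∀ ω : (Fin M → Fin n → ℝ) × (Fin n → ℝ),
      ENNReal.ofReal (Real.exp (-((4*v)⁻¹ * S ω)))
        = ∏ j, ENNReal.ofReal (Real.exp (-((4*v)⁻¹ *
            ((ω.1 k j - ω.1 i j)^2 + 2*(ω.1 k j - ω.1 i j)*ω.2 j)))) := by
    intro ω
    rw [← ENNReal.ofReal_prod_of_nonneg (fun j _ => (Real.exp_pos _).le), ← Real.exp_sum]
    congr 2
    rw [hS_def, Finset.mul_sum, ← Finset.sum_neg_distrib]
  simp_rw [hprod]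
  set c8 : ℝ := (8*v)⁻¹ with hc8_def
  have hc8 : 0 ≤ c8 := by positivity
  set κ : ℝ := 1+2*c8*P with hκ_def
  have hκ : 0 < κ := by positivity
  have hgm : Measurable (fun ω : (Fin M → Fin n → ℝ) × (Fin n → ℝ) =>
      ∏ j, ENNReal.ofReal (Real.exp (-((4*v)⁻¹ *
        ((ω.1 k j - ω.1 i j)^2 + 2*(ω.1 k j - ω.1 i j)*ω.2 j))))) :=
    Finset.measurable_prod _ (fun j _ => by fun_prop)
  rw [hμ, lintegral_prod _ hgm.aemeasurable]
  have inner_z : ∀ c : Fin M → Fin n → ℝ,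
      (∫⁻ z, ∏ j, ENNReal.ofReal (Real.exp (-((4*v)⁻¹ *
          ((c k j - c i j)^2 + 2*(c k j - c i j)*z j)))) ∂ζ)
        = ∏ j, ENNReal.ofReal (Real.exp (-(c8 * (c k j - c i j)^2))) := by
    intro c
    rw [hζ, lintegral_pi_prod _ (fun j u => ENNReal.ofReal (Real.exp (-((4*v)⁻¹ *
        ((c k j - c i j)^2 + 2*(c k j - c i j)*u))))) (fun j => by fun_prop)]
    refine Finset.prod_congr rfl (fun j _ => ?_)
    rw [hγσ, lemA hv (c k j - c i j)]
  rw [lintegral_congr inner_z]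
  set F : (Fin n → ℝ) × (Fin n → ℝ) → ℝ≥0∞ :=
    fun p => ∏ j, ENNReal.ofReal (Real.exp (-(c8 * (p.1 j - p.2 j)^2))) with hF_def
  have hFm : Measurable F := Finset.measurable_prod _ (fun j _ => by fun_prop)
  have stepD : (∫⁻ c, F (c k, c i) ∂ν)
      = ∫⁻ p, F p ∂((Measure.pi fun _ : Fin n => γP).prod (Measure.pi fun _ : Fin n => γP)) := by
    rw [← map_eval_pair (Measure.pi fun _ : Fin n => γP) hik,
      lintegral_map hFm ((measurable_pi_apply k).prodMk (measurable_pi_apply i))]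
  rw [show (∫⁻ c, ∏ j, ENNReal.ofReal (Real.exp (-(c8 * (c k j - c i j)^2))) ∂ν)
      = ∫⁻ c, F (c k, c i) ∂ν from rfl, stepD,
    lintegral_prod _ hFm.aemeasurable]
  have inner_y : ∀ x : Fin n → ℝ,
      (∫⁻ y, F (x, y) ∂(Measure.pi fun _ : Fin n => γP))
        = ∏ j, ENNReal.ofReal ((Real.sqrt κ)⁻¹ * Real.exp (-(c8/κ * (x j)^2))) := by
    intro x
    rw [hF_def]
    simp only
    rw [lintegral_pi_prod _ (fun j u => ENNReal.ofReal (Real.exp (-(c8 * (x j - u)^2))))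
      (fun j => by fun_prop)]
    exact Finset.prod_congr rfl (fun j _ => by rw [hγP, lemB hP hc8 (x j)])
  rw [lintegral_congr inner_y,
    lintegral_pi_prod _ (fun j u => ENNReal.ofReal ((Real.sqrt κ)⁻¹ * Real.exp (-(c8/κ * u^2))))
      (fun j => by fun_prop)]
  have factor : (∫⁻ u, ENNReal.ofReal ((Real.sqrt κ)⁻¹ * Real.exp (-(c8/κ * u^2))) ∂γP)
      = ENNReal.ofReal ((Real.sqrt (1+P/(2*v)))⁻¹) := by
    simp_rw [ENNReal.ofReal_mul (by positivity : (0:ℝ) ≤ (Real.sqrt κ)⁻¹)]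
    rw [lintegral_const_mul _ (by fun_prop), hγP, lemC hP (by positivity : (0:ℝ) ≤ c8/κ),
      ← ENNReal.ofReal_mul (by positivity)]
    congr 1
    rw [← mul_inv, ← Real.sqrt_mul hκ.le]
    congr 2
    rw [hκ_def, hc8_def]
    field_simp
    ring
  simp_rw [factor]
  rw [Finset.prod_const, Finset.card_univ, Fintype.card_fin]

/-- Let `n ≥ 1`, `M ≥ 2`, `P > 0`, `σ_b > 0`.  Draw `M` codewords
`C(1), …, C(M) ∈ ℝⁿ` independently, each with i.i.d. coordinates `N(0,P)`, and
independently a noise vector `Z ∈ ℝⁿ` with i.i.d. coordinates `N(0,σ_b²)`.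
Fix `k` and let `Y = C(k) + Z`.  Then the probability (over codebook and
noise) that some `i ≠ k` satisfies `‖Y − C(i)‖₂ ≤ ‖Y − C(k)‖₂` is at most
`(M−1)·(1 + P/(2σ_b²))^{−n/2}`. -/
theorem stmt_12 (n M : ℕ) (hn : 1 ≤ n) (hM : 2 ≤ M) (P σb : ℝ)
    (hP : 0 < P) (hσb : 0 < σb) (k : Fin M) :
    (((Measure.pi fun _ : Fin M => Measure.pi fun _ : Fin n =>
            gaussianReal 0 P.toNNReal).prod
        (Measure.pi fun _ : Fin n => gaussianReal 0 (σb ^ 2).toNNReal))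
      {ω : (Fin M → Fin n → ℝ) × (Fin n → ℝ) |
        ∃ i, i ≠ k ∧
          Real.sqrt (∑ j, ((ω.1 k j + ω.2 j) - ω.1 i j) ^ 2) ≤
            Real.sqrt (∑ j, ((ω.1 k j + ω.2 j) - ω.1 k j) ^ 2)}).toReal
      ≤ (M - 1) * (1 + P / (2 * σb ^ 2)) ^ (-(n : ℝ) / 2) := by
  set μ := ((Measure.pi fun _ : Fin M => Measure.pi fun _ : Fin n =>
            gaussianReal 0 P.toNNReal).prod
        (Measure.pi fun _ : Fin n => gaussianReal 0 (σb ^ 2).toNNReal)) with hμ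
  set T : Fin M → Set ((Fin M → Fin n → ℝ) × (Fin n → ℝ)) :=
    fun i => {ω | i ≠ k ∧
      ∑ j, ((ω.1 k j - ω.1 i j)^2 + 2*(ω.1 k j - ω.1 i j)*ω.2 j) ≤ 0} with hT
  set β : ℝ := 1 + P/(2*σb^2) with hβ
  have hβ1 : (1:ℝ) ≤ β := by
    have : 0 ≤ P/(2*σb^2) := by positivity
    rw [hβ]; linarith
  have hβ0 : (0:ℝ) < β := lt_of_lt_of_le one_pos hβ1
  set ρ : ℝ := (Real.sqrt β)⁻¹ with hρ
  have hρ0 : 0 ≤ ρ := by positivity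
  -- inclusion in the union
  have hsub : {ω : (Fin M → Fin n → ℝ) × (Fin n → ℝ) |
        ∃ i, i ≠ k ∧
          Real.sqrt (∑ j, ((ω.1 k j + ω.2 j) - ω.1 i j) ^ 2) ≤
            Real.sqrt (∑ j, ((ω.1 k j + ω.2 j) - ω.1 k j) ^ 2)} ⊆ ⋃ i, T i := by
    rintro ω ⟨i, hik, hsqrt⟩
    refine Set.mem_iUnion.2 ⟨i, hik, ?_⟩
    have ha : (0:ℝ) ≤ ∑ j, ((ω.1 k j + ω.2 j) - ω.1 i j) ^ 2 :=
      Finset.sum_nonneg fun j _ => sq_nonneg _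
    have hb : (0:ℝ) ≤ ∑ j, ((ω.1 k j + ω.2 j) - ω.1 k j) ^ 2 :=
      Finset.sum_nonneg fun j _ => sq_nonneg _
    have hle : ∑ j, ((ω.1 k j + ω.2 j) - ω.1 i j) ^ 2
        ≤ ∑ j, ((ω.1 k j + ω.2 j) - ω.1 k j) ^ 2 := by
      have := pow_le_pow_left₀ (Real.sqrt_nonneg _) hsqrt 2
      rwa [Real.sq_sqrt ha, Real.sq_sqrt hb] at this
    have hdiff : ∑ j, ((ω.1 k j - ω.1 i j)^2 + 2*(ω.1 k j - ω.1 i j)*ω.2 j)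
        = (∑ j, ((ω.1 k j + ω.2 j) - ω.1 i j) ^ 2)
          - ∑ j, ((ω.1 k j + ω.2 j) - ω.1 k j) ^ 2 := by
      rw [← Finset.sum_sub_distrib]
      exact Finset.sum_congr rfl fun j _ => by ring
    rw [hdiff]
    linarith
  -- union bound and pairwise bounds
  have hbound : μ {ω : (Fin M → Fin n → ℝ) × (Fin n → ℝ) |
        ∃ i, i ≠ k ∧
          Real.sqrt (∑ j, ((ω.1 k j + ω.2 j) - ω.1 i j) ^ 2) ≤
            Real.sqrt (∑ j, ((ω.1 k j + ω.2 j) - ω.1 k j) ^ 2)}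
      ≤ (M - 1) * (ENNReal.ofReal ρ)^n := by
    refine (measure_mono hsub).trans ((measure_iUnion_le T).trans ?_)
    rw [tsum_fintype]
    have hTk : μ (T k) = 0 := by
      have : T k = ∅ := by simp [hT]
      simp [this]
    rw [← Finset.add_sum_erase Finset.univ _ (Finset.mem_univ k), hTk, zero_add]
    have hTb : ∀ i ∈ Finset.univ.erase k, μ (T i) ≤ (ENNReal.ofReal ρ)^n := by
      intro i hi
      have hik : i ≠ k := (Finset.mem_erase.1 hi).1
      refine (measure_mono (fun ω h => h.2)).trans ?_
      exact pair_bound n M hP hσb k i hik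
    calc ∑ i ∈ Finset.univ.erase k, μ (T i)
        ≤ ∑ _i ∈ Finset.univ.erase k, (ENNReal.ofReal ρ)^n := Finset.sum_le_sum hTb
      _ = (M - 1) * (ENNReal.ofReal ρ)^n := by
          rw [Finset.sum_const, Finset.card_erase_of_mem (Finset.mem_univ k),
            Finset.card_univ, Fintype.card_fin, nsmul_eq_mul]
          norm_cast
  -- pass to real numbers
  have hne : ((M:ℝ≥0∞) - 1) * (ENNReal.ofReal ρ)^n ≠ ∞ :=
    ENNReal.mul_ne_top (ENNReal.sub_ne_top (ENNReal.natCast_ne_top M))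
      (ENNReal.pow_ne_top ENNReal.ofReal_ne_top)
  refine le_trans (ENNReal.toReal_mono hne hbound) ?_
  rw [ENNReal.toReal_mul, ENNReal.toReal_pow, ENNReal.toReal_ofReal hρ0,
    ENNReal.toReal_sub_of_le (by exact_mod_cast Nat.one_le_of_lt hM) (ENNReal.natCast_ne_top M),
    ENNReal.toReal_natCast]
  norm_num
  have hpow : ρ^n = β ^ (-(n:ℝ)/2) := by
    rw [hρ, Real.sqrt_eq_rpow, ← Real.rpow_neg hβ0.le,
      ← Real.rpow_natCast (β ^ (-(1/2):ℝ)) n, ← Real.rpow_mul hβ0.le]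
    congr 1
    ring
  rw [hpow, hβ]
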